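/- Let f∈𝒦 and suppose that for every k≥1 one has inf_{n∈ℕ} Δ_k(f,n) > 0 and that ∑_{k≥1} sup_{n∈ℕ} Δ_k(f,n)^{-1} < ∞. Then T_f is an everywhere defined bounded operator on ℓ²(ℕ): D(T_f)=ℓ²(ℕ) and there is a constant such that ‖T_fφ‖ ≤ C‖φ‖ for all φ. In particular T_f is a bounded self-adjoint operator. -/

import Mathlib

open Filter Topology
open scoped ENNReal

noncomputable section

abbrev l2 : Type := lp (fun _ : ℕ => ℂ) 2

def xi (n : ℕ) : l2 := lp.single 2 n 1

def FinSupp (φ : l2) : Prop := (Function.support (⇑φ : ℕ → ℂ)).Finite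

/-- The class 𝒦. -/
def MemK (f : ℕ → ℝ) : Prop := 0 < f 0 ∧ ∀ n, f n < f (n + 1)

/-- The class 𝒦⁻. -/
def MemKminus (f : ℕ → ℝ) : Prop := MemK f ∧ Summable (fun n => 1 / (f n) ^ 2)

def fsq (f : ℕ → ℝ) : ℕ → ℝ := fun n => (f n) ^ 2

/-- the sequence of the multiplication operator `f(N)` applied to φ -/
def mulSeq (f : ℕ → ℝ) (φ : ℕ → ℂ) : ℕ → ℂ := fun n => ((f n : ℝ) : ℂ) * φ n

/-- the sequence of `f(N)^p` applied to φ -/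
def powSeq (f : ℕ → ℝ) (p : ℕ) (φ : ℕ → ℂ) : ℕ → ℂ := fun n => (((f n) ^ p : ℝ) : ℂ) * φ n

/-- coordinates of `T_{f,m} φ`. -/
def TfmSeq (f : ℕ → ℝ) (m : ℕ) (φ : ℕ → ℂ) : ℕ → ℂ := fun n =>
  Complex.I * ∑ k ∈ Finset.Icc 1 m,
    ((if k ≤ n then φ (n - k) / ((f n - f (n - k) : ℝ) : ℂ) else 0)
      - φ (n + k) / ((f (n + k) - f n : ℝ) : ℂ))

/-- `(φ, ψ)` is in the graph of `T_f`. -/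
def InGraphTf (f : ℕ → ℝ) (φ ψ : l2) : Prop :=
  ∃ h : ∀ m, Memℓp (TfmSeq f m (⇑φ)) 2,
    Tendsto (fun m => (⟨TfmSeq f m (⇑φ), h m⟩ : l2)) atTop (𝓝 ψ)

namespace Stmt4Aux


def seqR (f : ℕ → ℝ) (k : ℕ) (φ : ℕ → ℂ) : ℕ → ℂ := fun n =>
  if k ≤ n then φ (n - k) / ((f n - f (n - k) : ℝ) : ℂ) else 0

def seqL (f : ℕ → ℝ) (k : ℕ) (φ : ℕ → ℂ) : ℕ → ℂ := fun n =>
  φ (n + k) / ((f (n + k) - f n : ℝ) : ℂ)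

lemma l2_summable_sq (φ : l2) : Summable (fun n => ‖(⇑φ : ℕ → ℂ) n‖ ^ 2) := by
  have h := (lp.memℓp φ).summable (p := 2) (by norm_num)
  have : (fun n => ‖(⇑φ : ℕ → ℂ) n‖ ^ (2 : ℝ≥0∞).toReal) = fun n => ‖(⇑φ : ℕ → ℂ) n‖ ^ 2 := by
    funext n
    rw [show (2 : ℝ≥0∞).toReal = (2 : ℝ) by norm_num, Real.rpow_two]
  rwa [this] at h

lemma l2_tsum_sq (φ : l2) : ∑' n, ‖(⇑φ : ℕ → ℂ) n‖ ^ 2 = ‖φ‖ ^ 2 := by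
  have h := lp.norm_rpow_eq_tsum (p := 2) (by norm_num) φ
  rw [show (2 : ℝ≥0∞).toReal = (2 : ℝ) by norm_num] at h
  simp_rw [Real.rpow_two] at h
  exact h.symm

lemma memℓp_of_sq {a : ℕ → ℂ} {B : ℝ} (hB : 0 ≤ B)
    (hs : Summable (fun n => ‖a n‖ ^ 2))
    (hle : ∑' n, ‖a n‖ ^ 2 ≤ B ^ 2) :
    ∃ h : Memℓp a 2, ‖(⟨a, h⟩ : l2)‖ ≤ B := by
  have h2 : (fun n => ‖a n‖ ^ (2 : ℝ≥0∞).toReal) = fun n => ‖a n‖ ^ 2 := by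
    funext n
    rw [show (2 : ℝ≥0∞).toReal = (2 : ℝ) by norm_num, Real.rpow_two]
  have hmem : Memℓp a 2 := memℓp_gen (by rw [h2]; exact hs)
  refine ⟨hmem, ?_⟩
  have hn : ‖(⟨a, hmem⟩ : l2)‖ ^ 2 ≤ B ^ 2 := by
    have := lp.norm_rpow_eq_tsum (p := 2) (by norm_num) (⟨a, hmem⟩ : l2)
    rw [show (2 : ℝ≥0∞).toReal = (2 : ℝ) by norm_num] at this
    simp_rw [Real.rpow_two] at this
    calc ‖(⟨a, hmem⟩ : l2)‖ ^ 2 = ∑' n, ‖a n‖ ^ 2 := this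
      _ ≤ B ^ 2 := hle
  have hnn : (0:ℝ) ≤ ‖(⟨a, hmem⟩ : l2)‖ := norm_nonneg _
  nlinarith

lemma exists_vec_pull (φ : l2) (a : ℕ → ℂ) (C : ℝ) (hC : 0 ≤ C) (e : ℕ → ℕ)
    (he : Function.Injective e) (hle : ∀ n, ‖a n‖ ≤ C * ‖(⇑φ : ℕ → ℂ) (e n)‖) :
    ∃ h : Memℓp a 2, ‖(⟨a, h⟩ : l2)‖ ≤ C * ‖φ‖ := by
  have hφs := l2_summable_sq φ
  have hcomp : Summable (fun n => ‖(⇑φ : ℕ → ℂ) (e n)‖ ^ 2) := hφs.comp_injective he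
  have hptle : ∀ n, ‖a n‖ ^ 2 ≤ C ^ 2 * ‖(⇑φ : ℕ → ℂ) (e n)‖ ^ 2 := by
    intro n
    rw [← mul_pow]
    exact pow_le_pow_left₀ (norm_nonneg _) (hle n) 2
  have hs : Summable (fun n => ‖a n‖ ^ 2) :=
    Summable.of_nonneg_of_le (fun n => by positivity) hptle (hcomp.mul_left _)
  refine memℓp_of_sq (by positivity) hs ?_
  calc ∑' n, ‖a n‖ ^ 2 ≤ ∑' n, C ^ 2 * ‖(⇑φ : ℕ → ℂ) (e n)‖ ^ 2 :=
        Summable.tsum_le_tsum hptle hs (hcomp.mul_left _)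
    _ = C ^ 2 * ∑' n, ‖(⇑φ : ℕ → ℂ) (e n)‖ ^ 2 := tsum_mul_left
    _ ≤ C ^ 2 * ∑' n, ‖(⇑φ : ℕ → ℂ) n‖ ^ 2 := by
        refine mul_le_mul_of_nonneg_left ?_ (by positivity)
        exact Summable.tsum_le_tsum_of_inj e he (fun c _ => by positivity) (fun n => le_rfl) hcomp hφs
    _ = (C * ‖φ‖) ^ 2 := by rw [l2_tsum_sq, mul_pow]

lemma exists_vec_push (φ : l2) (a : ℕ → ℂ) (C : ℝ) (hC : 0 ≤ C) (e : ℕ → ℕ)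
    (he : Function.Injective e) (hle : ∀ j, ‖a (e j)‖ ≤ C * ‖(⇑φ : ℕ → ℂ) j‖)
    (hzero : ∀ n, n ∉ Set.range e → a n = 0) :
    ∃ h : Memℓp a 2, ‖(⟨a, h⟩ : l2)‖ ≤ C * ‖φ‖ := by
  have hφs := l2_summable_sq φ
  have hptle : ∀ j, ‖a (e j)‖ ^ 2 ≤ C ^ 2 * ‖(⇑φ : ℕ → ℂ) j‖ ^ 2 := by
    intro j
    rw [← mul_pow]
    exact pow_le_pow_left₀ (norm_nonneg _) (hle j) 2
  have hscomp : Summable (fun j => ‖a (e j)‖ ^ 2) :=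
    Summable.of_nonneg_of_le (fun n => by positivity) hptle (hφs.mul_left _)
  have hsupp : ∀ n ∉ Set.range e, ‖a n‖ ^ 2 = 0 := fun n hn => by rw [hzero n hn]; simp
  have hs : Summable (fun n => ‖a n‖ ^ 2) := (he.summable_iff hsupp).mp hscomp
  refine memℓp_of_sq (by positivity) hs ?_
  have heq : ∑' j, ‖a (e j)‖ ^ 2 = ∑' n, ‖a n‖ ^ 2 :=
    he.tsum_eq (f := fun n => ‖a n‖ ^ 2) (by
      intro n hn
      by_contra hr
      exact hn (by simpa [Function.support] using hsupp n hr))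
  calc ∑' n, ‖a n‖ ^ 2 = ∑' j, ‖a (e j)‖ ^ 2 := heq.symm
    _ ≤ ∑' j, C ^ 2 * ‖(⇑φ : ℕ → ℂ) j‖ ^ 2 := Summable.tsum_le_tsum hptle hscomp (hφs.mul_left _)
    _ = C ^ 2 * ∑' j, ‖(⇑φ : ℕ → ℂ) j‖ ^ 2 := tsum_mul_left
    _ = (C * ‖φ‖) ^ 2 := by rw [l2_tsum_sq, mul_pow]


lemma norm_div_ofReal_le (x : ℂ) (d C : ℝ) (hd : 0 < d) (hle : d⁻¹ ≤ C) :
    ‖x / ((d : ℝ) : ℂ)‖ ≤ C * ‖x‖ := by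
  rw [norm_div, Complex.norm_real, Real.norm_eq_abs, abs_of_pos hd, div_eq_mul_inv, mul_comm]
  exact mul_le_mul_of_nonneg_right hle (norm_nonneg _)

lemma seqR_apply_add (f : ℕ → ℝ) (k : ℕ) (φ : ℕ → ℂ) (j : ℕ) :
    seqR f k φ (j + k) = φ j / ((f (j + k) - f j : ℝ) : ℂ) := by
  simp [seqR, Nat.le_add_left, Nat.add_sub_cancel]

lemma seqR_eq_zero (f : ℕ → ℝ) (k : ℕ) (φ : ℕ → ℂ) (n : ℕ)
    (hn : n ∉ Set.range (fun j => j + k)) : seqR f k φ n = 0 := by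
  have : ¬ k ≤ n := fun h => hn ⟨n - k, by simp; omega⟩
  simp [seqR, this]

lemma vecR_spec (f : ℕ → ℝ) (k : ℕ) (C : ℝ) (hC : 0 ≤ C)
    (hpos : ∀ n, 0 < f (n + k) - f n)
    (hle : ∀ n, (f (n + k) - f n)⁻¹ ≤ C) (φ : l2) :
    ∃ h : Memℓp (seqR f k (⇑φ)) 2, ‖(⟨seqR f k (⇑φ), h⟩ : l2)‖ ≤ C * ‖φ‖ := by
  refine exists_vec_push φ _ C hC (fun j => j + k) (add_left_injective k) ?_ ?_
  · intro j
    rw [seqR_apply_add]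
    exact norm_div_ofReal_le _ _ _ (hpos j) (hle j)
  · exact seqR_eq_zero f k _

lemma vecL_spec (f : ℕ → ℝ) (k : ℕ) (C : ℝ) (hC : 0 ≤ C)
    (hpos : ∀ n, 0 < f (n + k) - f n)
    (hle : ∀ n, (f (n + k) - f n)⁻¹ ≤ C) (φ : l2) :
    ∃ h : Memℓp (seqL f k (⇑φ)) 2, ‖(⟨seqL f k (⇑φ), h⟩ : l2)‖ ≤ C * ‖φ‖ := by
  refine exists_vec_pull φ _ C hC (fun n => n + k) (add_left_injective k) ?_
  intro n
  exact norm_div_ofReal_le _ _ _ (hpos n) (hle n)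


lemma adjR (f : ℕ → ℝ) (k : ℕ) (φ ψ : l2)
    (hmR : Memℓp (seqR f k (⇑φ)) 2) (hmL : Memℓp (seqL f k (⇑ψ)) 2) :
    (inner ℂ (⟨seqR f k (⇑φ), hmR⟩ : l2) ψ : ℂ) = inner ℂ φ (⟨seqL f k (⇑ψ), hmL⟩ : l2) := by
  rw [lp.inner_eq_tsum, lp.inner_eq_tsum]
  have hsupp : Function.support
      (fun n => (inner ℂ (seqR f k (⇑φ) n) ((⇑ψ : ℕ → ℂ) n) : ℂ)) ⊆
      Set.range (fun j => j + k) := by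
    intro n hn
    by_contra hr
    exact hn (by simp only [seqR_eq_zero f k _ n hr, inner_zero_left])
  have key := (add_left_injective k).tsum_eq
    (f := fun n => (inner ℂ (seqR f k (⇑φ) n) ((⇑ψ : ℕ → ℂ) n) : ℂ)) hsupp
  calc (∑' n, (inner ℂ ((⟨seqR f k (⇑φ), hmR⟩ : l2) n) (ψ n) : ℂ))
      = ∑' j, (inner ℂ (seqR f k (⇑φ) (j + k)) ((⇑ψ : ℕ → ℂ) (j + k)) : ℂ) := key.symm
    _ = ∑' j, (inner ℂ ((⇑φ : ℕ → ℂ) j) ((⟨seqL f k (⇑ψ), hmL⟩ : l2) j) : ℂ) := by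
        refine tsum_congr fun j => ?_
        show (inner ℂ (seqR f k (⇑φ) (j + k)) ((⇑ψ : ℕ → ℂ) (j + k)) : ℂ)
          = inner ℂ ((⇑φ : ℕ → ℂ) j) (seqL f k (⇑ψ) j)
        rw [seqR_apply_add]
        simp only [seqL, RCLike.inner_apply, map_div₀, Complex.conj_ofReal]
        ring

lemma adjL (f : ℕ → ℝ) (k : ℕ) (φ ψ : l2)
    (hmL : Memℓp (seqL f k (⇑φ)) 2) (hmR : Memℓp (seqR f k (⇑ψ)) 2) :
    (inner ℂ (⟨seqL f k (⇑φ), hmL⟩ : l2) ψ : ℂ) = inner ℂ φ (⟨seqR f k (⇑ψ), hmR⟩ : l2) := by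
  rw [lp.inner_eq_tsum, lp.inner_eq_tsum]
  have hsupp : Function.support
      (fun n => (inner ℂ ((⇑φ : ℕ → ℂ) n) (seqR f k (⇑ψ) n) : ℂ)) ⊆
      Set.range (fun j => j + k) := by
    intro n hn
    by_contra hr
    exact hn (by simp only [seqR_eq_zero f k _ n hr, inner_zero_right])
  have key := (add_left_injective k).tsum_eq
    (f := fun n => (inner ℂ ((⇑φ : ℕ → ℂ) n) (seqR f k (⇑ψ) n) : ℂ)) hsupp
  calc (∑' n, (inner ℂ ((⟨seqL f k (⇑φ), hmL⟩ : l2) n) (ψ n) : ℂ))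
      = ∑' j, (inner ℂ ((⇑φ : ℕ → ℂ) (j + k)) (seqR f k (⇑ψ) (j + k)) : ℂ) := by
        refine tsum_congr fun j => ?_
        show (inner ℂ (seqL f k (⇑φ) j) ((⇑ψ : ℕ → ℂ) j) : ℂ)
          = inner ℂ ((⇑φ : ℕ → ℂ) (j + k)) (seqR f k (⇑ψ) (j + k))
        rw [seqR_apply_add]
        simp only [seqL, RCLike.inner_apply, map_div₀, Complex.conj_ofReal]
        ring
    _ = ∑' n, (inner ℂ ((⇑φ : ℕ → ℂ) n) ((⟨seqR f k (⇑ψ), hmR⟩ : l2) n) : ℂ) := key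


end Stmt4Aux

open Stmt4Aux in
/-- Let `f ∈ 𝒦`. Suppose `inf_n Δ_k(f,n) > 0` for every `k ≥ 1` and that
`∑_{k ≥ 1} sup_n Δ_k(f,n)⁻¹ < ∞`. Then `T_f` is everywhere defined and bounded:
`D(T_f) = ℓ²(ℕ)` and `‖T_f φ‖ ≤ C ‖φ‖`; moreover (being symmetric) `T_f` is self-adjoint. -/
theorem stmt4 (f : ℕ → ℝ) (hf : MemK f)
    (hinf : ∀ k : ℕ, 1 ≤ k → 0 < ⨅ n : ℕ, (f (n + k) - f n))
    (hsum : Summable (fun k : ℕ => ⨆ n : ℕ, (f (n + (k + 1)) - f n)⁻¹)) :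
    ∃ C : ℝ, ∀ φ : l2, ∃ Tφ : l2, InGraphTf f φ Tφ ∧ ‖Tφ‖ ≤ C * ‖φ‖ ∧
      ∀ ψ Tψ : l2, InGraphTf f ψ Tψ → (inner ℂ Tφ ψ : ℂ) = inner ℂ φ Tψ := by
  classical
  set c : ℕ → ℝ := fun k => ⨆ n, (f (n + k) - f n)⁻¹ with hc
  have hmono : StrictMono f := strictMono_nat_of_lt_succ hf.2
  have hdpos : ∀ k n : ℕ, 0 < f (n + (k + 1)) - f n := fun k n =>
    sub_pos.2 (hmono (by omega))
  have hbdd : ∀ k : ℕ, BddAbove (Set.range fun n => (f (n + (k + 1)) - f n)⁻¹) := by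
    intro k
    refine ⟨(⨅ n, (f (n + (k + 1)) - f n))⁻¹, ?_⟩
    rintro x ⟨n, rfl⟩
    exact inv_anti₀ (hinf (k + 1) (by omega))
      (ciInf_le ⟨0, by rintro y ⟨m, rfl⟩; exact (hdpos k m).le⟩ n)
  have hcle : ∀ k n : ℕ, (f (n + (k + 1)) - f n)⁻¹ ≤ c (k + 1) := fun k n =>
    le_ciSup (hbdd k) n
  have hcnn : ∀ k : ℕ, 0 ≤ c (k + 1) := fun k =>
    le_trans (inv_nonneg.2 (hdpos k 0).le) (hcle k 0)
  have hsum' : Summable (fun k : ℕ => c (k + 1)) := hsum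
  -- the building-block vectors
  choose memR nR using fun (k : ℕ) (φ : l2) =>
    vecR_spec f (k + 1) (c (k + 1)) (hcnn k) (hdpos k) (hcle k) φ
  choose memL nL using fun (k : ℕ) (φ : l2) =>
    vecL_spec f (k + 1) (c (k + 1)) (hcnn k) (hdpos k) (hcle k) φ
  set vR : ℕ → l2 → l2 := fun k φ => ⟨seqR f (k + 1) (⇑φ), memR k φ⟩ with hvR
  set vL : ℕ → l2 → l2 := fun k φ => ⟨seqL f (k + 1) (⇑φ), memL k φ⟩ with hvL
  set Av : ℕ → l2 → l2 := fun k φ => Complex.I • (vR k φ - vL k φ) with hAv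
  have hAnorm : ∀ (k : ℕ) (φ : l2), ‖Av k φ‖ ≤ 2 * c (k + 1) * ‖φ‖ := by
    intro k φ
    calc ‖Av k φ‖ = ‖vR k φ - vL k φ‖ := by
          rw [hAv]; rw [norm_smul, Complex.norm_I, one_mul]
      _ ≤ ‖vR k φ‖ + ‖vL k φ‖ := norm_sub_le _ _
      _ ≤ c (k + 1) * ‖φ‖ + c (k + 1) * ‖φ‖ := add_le_add (nR k φ) (nL k φ)
      _ = 2 * c (k + 1) * ‖φ‖ := by ring
  have hbsum : ∀ φ : l2, Summable (fun k : ℕ => 2 * c (k + 1) * ‖φ‖) := fun φ =>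
    (hsum'.mul_left 2).mul_right ‖φ‖
  have hAsum : ∀ φ : l2, Summable (fun k => Av k φ) := fun φ =>
    Summable.of_norm_bounded (hbsum φ) (fun k => hAnorm k φ)
  set T : l2 → l2 := fun φ => ∑' k, Av k φ with hT
  have hHas : ∀ φ : l2, HasSum (fun k => Av k φ) (T φ) := fun φ => (hAsum φ).hasSum
  -- partial sums have coordinates TfmSeq
  have hcoe : ∀ (φ : l2) (m : ℕ),
      (⇑(∑ j ∈ Finset.range m, Av j φ) : ℕ → ℂ) = TfmSeq f m (⇑φ) := by
    intro φ m
    funext n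
    have h1 : (⇑(∑ j ∈ Finset.range m, Av j φ) : ℕ → ℂ) n
        = ∑ j ∈ Finset.range m, (⇑(Av j φ) : ℕ → ℂ) n := by
      rw [lp.coeFn_sum, Finset.sum_apply]
    have h2 : ∀ j, (⇑(Av j φ) : ℕ → ℂ) n
        = Complex.I * (seqR f (j + 1) (⇑φ) n - seqL f (j + 1) (⇑φ) n) := by
      intro j
      rw [hAv]
      rw [lp.coeFn_smul, Pi.smul_apply, lp.coeFn_sub, Pi.sub_apply]
      rfl
    rw [h1]
    simp_rw [h2]
    rw [TfmSeq, show Finset.Icc 1 m = Finset.Ico 1 (m + 1) from (Finset.Ico_add_one_right_eq_Icc 1 m).symm,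
      Finset.sum_Ico_eq_sum_range]
    simp only [Nat.add_sub_cancel]
    rw [Finset.mul_sum]
    refine Finset.sum_congr rfl fun j _ => ?_
    rw [add_comm 1 j]
    rfl
  have hmemT : ∀ (φ : l2) (m : ℕ), Memℓp (TfmSeq f m (⇑φ)) 2 := fun φ m =>
    hcoe φ m ▸ lp.memℓp _
  have hseq_eq : ∀ (φ : l2) (h : ∀ m, Memℓp (TfmSeq f m (⇑φ)) 2) (m : ℕ),
      (⟨TfmSeq f m (⇑φ), h m⟩ : l2) = ∑ j ∈ Finset.range m, Av j φ := fun φ h m =>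
    lp.ext (hcoe φ m).symm
  have htendT : ∀ (φ : l2), Tendsto (fun m => ∑ j ∈ Finset.range m, Av j φ)
      atTop (𝓝 (T φ)) := fun φ => (hHas φ).tendsto_sum_nat
  -- the symmetry at finite stage
  have symA : ∀ (k : ℕ) (φ ψ : l2), (inner ℂ (Av k φ) ψ : ℂ) = inner ℂ φ (Av k ψ) := by
    intro k φ ψ
    rw [hAv]
    rw [inner_smul_left, inner_sub_left, inner_smul_right, inner_sub_right]
    rw [hvR, hvL]
    rw [adjR f (k + 1) φ ψ (memR k φ) (memL k ψ), adjL f (k + 1) φ ψ (memL k φ) (memR k ψ)]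
    rw [Complex.conj_I]
    ring
  have symm_m : ∀ (m : ℕ) (φ ψ : l2),
      (inner ℂ (∑ j ∈ Finset.range m, Av j φ) ψ : ℂ)
        = inner ℂ φ (∑ j ∈ Finset.range m, Av j ψ) := by
    intro m φ ψ
    rw [sum_inner, inner_sum]
    exact Finset.sum_congr rfl fun j _ => symA j φ ψ
  -- the constant
  refine ⟨2 * (∑' k, c (k + 1)), ?_⟩
  intro φ
  refine ⟨T φ, ⟨hmemT φ, ?_⟩, ?_, ?_⟩
  · have heq : (fun m => (⟨TfmSeq f m (⇑φ), hmemT φ m⟩ : l2))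
        = fun m => ∑ j ∈ Finset.range m, Av j φ := funext (hseq_eq φ (hmemT φ))
    rw [heq]
    exact htendT φ
  · have hns : Summable (fun k => ‖Av k φ‖) :=
      Summable.of_nonneg_of_le (fun k => norm_nonneg _) (fun k => hAnorm k φ) (hbsum φ)
    calc ‖T φ‖ ≤ ∑' k, ‖Av k φ‖ := norm_tsum_le_tsum_norm hns
      _ ≤ ∑' k, 2 * c (k + 1) * ‖φ‖ := Summable.tsum_le_tsum (fun k => hAnorm k φ) hns (hbsum φ)
      _ = (∑' k, 2 * c (k + 1)) * ‖φ‖ := tsum_mul_right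
      _ = 2 * (∑' k, c (k + 1)) * ‖φ‖ := by rw [tsum_mul_left]
  · intro ψ Tψ hgraph
    obtain ⟨h', ht'⟩ := hgraph
    have ht'' : Tendsto (fun m => ∑ j ∈ Finset.range m, Av j ψ) atTop (𝓝 Tψ) := by
      have heq : (fun m => (⟨TfmSeq f m (⇑ψ), h' m⟩ : l2))
          = fun m => ∑ j ∈ Finset.range m, Av j ψ := funext (hseq_eq ψ h')
      rwa [heq] at ht'
    have hTψ : Tψ = T ψ := tendsto_nhds_unique ht'' (htendT ψ)
    rw [hTψ]
    have t1 : Tendsto (fun m => (inner ℂ (∑ j ∈ Finset.range m, Av j φ) ψ : ℂ))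
        atTop (𝓝 (inner ℂ (T φ) ψ)) := (htendT φ).inner tendsto_const_nhds
    have t2 : Tendsto (fun m => (inner ℂ φ (∑ j ∈ Finset.range m, Av j ψ) : ℂ))
        atTop (𝓝 (inner ℂ φ (T ψ))) := tendsto_const_nhds.inner (htendT ψ)
    have hfe : (fun m => (inner ℂ (∑ j ∈ Finset.range m, Av j φ) ψ : ℂ))
        = fun m => (inner ℂ φ (∑ j ∈ Finset.range m, Av j ψ) : ℂ) :=
      funext fun m => symm_m m φ ψ
    rw [hfe] at t1
    exact tendsto_nhds_unique t1 t2
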